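/- With a_n = β^{-n}, b_n = 1, k_n = ⌊q^{-n}⌋, for every x < 0: lim_{n→∞} F_{β,p}(x/a_n + b_n)^{k_n} = exp(−(−x)^{log q / log β} · ν_{β,q}(log(−x))), where ν_{β,q} is the periodic function satisfying F_{β,q}(y) = y^{log q/log β}·ν_{β,q}(log y) for 0 < y ≤ 1. -/

import Mathlib

open Filter Real

/-- Key analytic lemma: for `0 < q < 1` and `c > 0`,
`(1 - c q^n) ^ ⌊(1/q)^n⌋ → exp (-c)`. -/
lemma aux_limit (q c : ℝ) (hq0 : 0 < q) (hq1 : q < 1) (hc : 0 < c) :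
    Filter.Tendsto (fun n : ℕ => (1 - c * q ^ n) ^ ⌊((1 : ℝ) / q) ^ n⌋₊)
      Filter.atTop (nhds (Real.exp (-c))) := by
  have hqn : Tendsto (fun n : ℕ => q ^ n) atTop (nhds 0) :=
    tendsto_pow_atTop_nhds_zero_of_lt_one hq0.le hq1
  have hqnpos : ∀ n : ℕ, 0 < q ^ n := fun n => pow_pos hq0 n
  -- floor times q^n → 1 by squeeze
  have hfl : Tendsto (fun n : ℕ => (⌊((1 : ℝ) / q) ^ n⌋₊ : ℝ) * q ^ n) atTop (nhds 1) := by
    have hlow : ∀ n : ℕ, 1 - q ^ n ≤ (⌊((1 : ℝ) / q) ^ n⌋₊ : ℝ) * q ^ n := by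
      intro n
      have h1 : ((1 : ℝ) / q) ^ n - 1 < (⌊((1 : ℝ) / q) ^ n⌋₊ : ℝ) := by
        have := Nat.sub_one_lt_floor (((1 : ℝ) / q) ^ n)
        linarith
      have h2 : (((1 : ℝ) / q) ^ n - 1) * q ^ n ≤ (⌊((1 : ℝ) / q) ^ n⌋₊ : ℝ) * q ^ n :=
        mul_le_mul_of_nonneg_right h1.le (hqnpos n).le
      have h3 : ((1 : ℝ) / q) ^ n * q ^ n = 1 := by
        rw [← mul_pow, div_mul_cancel₀ _ hq0.ne', one_pow]
      nlinarith
    have hup : ∀ n : ℕ, (⌊((1 : ℝ) / q) ^ n⌋₊ : ℝ) * q ^ n ≤ 1 := by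
      intro n
      have h1 : (⌊((1 : ℝ) / q) ^ n⌋₊ : ℝ) ≤ ((1 : ℝ) / q) ^ n :=
        Nat.floor_le (by positivity)
      have h2 : (⌊((1 : ℝ) / q) ^ n⌋₊ : ℝ) * q ^ n ≤ ((1 : ℝ) / q) ^ n * q ^ n :=
        mul_le_mul_of_nonneg_right h1 (hqnpos n).le
      have h3 : ((1 : ℝ) / q) ^ n * q ^ n = 1 := by
        rw [← mul_pow, div_mul_cancel₀ _ hq0.ne', one_pow]
      linarith
    have hl : Tendsto (fun n : ℕ => 1 - q ^ n) atTop (nhds 1) := by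
      have := hqn.const_sub 1
      simpa using this
    exact tendsto_of_tendsto_of_tendsto_of_le_of_le hl tendsto_const_nhds hlow hup
  -- log(1 - c q^n)/(-c q^n) → 1 via derivative of log(1+u) at 0
  have hderiv : HasDerivAt (fun u : ℝ => Real.log (1 + u)) 1 0 := by
    have h1 : HasDerivAt (fun u : ℝ => 1 + u) 1 0 := by
      simpa using (hasDerivAt_id (0 : ℝ)).const_add 1
    have h2 : HasDerivAt Real.log ((1 : ℝ)⁻¹) (1 + 0) := by
      simpa using Real.hasDerivAt_log (by norm_num : (1 : ℝ) + 0 ≠ 0)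
    have h3 := h2.comp 0 h1
    rw [inv_one, one_mul] at h3
    exact h3
  have hslope : Tendsto (slope (fun u : ℝ => Real.log (1 + u)) 0) (nhdsWithin 0 {(0 : ℝ)}ᶜ)
      (nhds 1) := hasDerivAt_iff_tendsto_slope.mp hderiv
  have hu : Tendsto (fun n : ℕ => -c * q ^ n) atTop (nhdsWithin 0 {(0 : ℝ)}ᶜ) := by
    rw [tendsto_nhdsWithin_iff]
    constructor
    · have := hqn.const_mul (-c)
      simpa using this
    · filter_upwards with n
      have h : -c * q ^ n ≠ 0 := by
        have := hqnpos n
        intro h; nlinarith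
      simpa using h
  have hratio : Tendsto (fun n : ℕ => Real.log (1 - c * q ^ n) / (-c * q ^ n)) atTop
      (nhds 1) := by
    have := hslope.comp hu
    refine this.congr fun n => ?_
    simp only [Function.comp, slope_def_field, Real.log_one]
    ring_nf
    simp
  -- exponent times log → -c
  have hmain : Tendsto (fun n : ℕ => (⌊((1 : ℝ) / q) ^ n⌋₊ : ℝ) * Real.log (1 - c * q ^ n))
      atTop (nhds (-c)) := by
    have hprod : Tendsto (fun n : ℕ =>
        ((⌊((1 : ℝ) / q) ^ n⌋₊ : ℝ) * q ^ n) * (Real.log (1 - c * q ^ n) / (-c * q ^ n)) * (-c))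
        atTop (nhds (1 * 1 * (-c))) := (hfl.mul hratio).mul_const (-c)
    have hprod' : Tendsto (fun n : ℕ =>
        ((⌊((1 : ℝ) / q) ^ n⌋₊ : ℝ) * q ^ n) * (Real.log (1 - c * q ^ n) / (-c * q ^ n)) * (-c))
        atTop (nhds (-c)) := by simpa using hprod
    refine hprod'.congr fun n => ?_
    have h1 : q ^ n ≠ 0 := (hqnpos n).ne'
    field_simp
  have hpos : ∀ᶠ n in atTop, 0 < 1 - c * q ^ n := by
    have ht : Tendsto (fun n : ℕ => c * q ^ n) atTop (nhds 0) := by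
      simpa using hqn.const_mul c
    have := ht.eventually_lt_const (by norm_num : (0 : ℝ) < 1)
    filter_upwards [this] with n hn
    linarith
  have hexp : Tendsto (fun n : ℕ =>
      Real.exp ((⌊((1 : ℝ) / q) ^ n⌋₊ : ℝ) * Real.log (1 - c * q ^ n))) atTop
      (nhds (Real.exp (-c))) := (Real.continuous_exp.tendsto _).comp hmain
  refine hexp.congr' ?_
  filter_upwards [hpos] with n hn
  rw [Real.exp_nat_mul, Real.exp_log hn]

theorem stmt11 (β p q : ℝ) (hβ0 : 0 < β) (hβ : β ≤ 1/2)
    (hp0 : 0 < p) (hp1 : p < 1) (hq : q = 1 - p)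
    (hne : ¬(β = 1/2 ∧ p = 1/2))
    (Fp Fq : ℝ → ℝ)
    (hFp : ∀ x : ℝ, Fp x = p * Fp (x / β) + q * Fp (x / β + 1 - 1 / β))
    (hFq : ∀ x : ℝ, Fq x = q * Fq (x / β) + p * Fq (x / β + 1 - 1 / β))
    (hsym : ∀ y : ℝ, 1 - Fp (1 - y) = Fq y)
    (ν : ℝ → ℝ) (hνpos : ∀ t : ℝ, 0 < ν t) (hνbdd : ∃ M : ℝ, ∀ t : ℝ, ν t ≤ M)
    (hνper : ∀ t : ℝ, ν (t + |Real.log β|) = ν t)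
    (hrep : ∀ y : ℝ, 0 < y → y ≤ 1 →
      Fq y = y ^ (Real.log q / Real.log β) * ν (Real.log y)) :
    ∀ x : ℝ, x < 0 →
      Filter.Tendsto
        (fun n : ℕ => Fp (x / β ^ (-(n : ℤ)) + 1) ^ ⌊((1 : ℝ) / q) ^ n⌋₊)
        Filter.atTop
        (nhds (Real.exp (-((-x) ^ (Real.log q / Real.log β) * ν (Real.log (-x)))))) := by
  intro x hx
  have hq0 : 0 < q := by rw [hq]; linarith
  have hq1 : q < 1 := by rw [hq]; linarith
  have hβ1 : β < 1 := by linarith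
  have hlogβ : Real.log β < 0 := Real.log_neg hβ0 hβ1
  set s : ℝ := Real.log q / Real.log β with hs
  have hxpos : 0 < -x := by linarith
  set c : ℝ := (-x) ^ s * ν (Real.log (-x)) with hc
  have hcpos : 0 < c := mul_pos (Real.rpow_pos_of_pos hxpos s) (hνpos _)
  -- periodicity applied n times
  have hper : ∀ (t : ℝ) (n : ℕ), ν (t + n * Real.log β) = ν t := by
    intro t n
    induction n with
    | zero => simp
    | succ k ih =>
      have h1 : ν (t + ((k : ℕ) + 1 : ℕ) * Real.log β + |Real.log β|)
          = ν (t + ((k : ℕ) + 1 : ℕ) * Real.log β) := hνper _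
      have habs : |Real.log β| = -Real.log β := abs_of_neg hlogβ
      rw [habs] at h1
      have heq : t + (((k : ℕ) + 1 : ℕ) : ℝ) * Real.log β + -Real.log β
          = t + (k : ℝ) * Real.log β := by push_cast; ring
      rw [heq] at h1
      rw [← h1]
      exact ih
  -- β ^ s = q
  have hβs : β ^ s = q := by
    rw [Real.rpow_def_of_pos hβ0]
    have : Real.log β * s = Real.log q := by
      rw [hs, mul_comm]
      exact div_mul_cancel₀ _ hlogβ.ne
    rw [this, Real.exp_log hq0]
  -- q^n → 0 eventually small
  have hβn : Tendsto (fun n : ℕ => β ^ n) atTop (nhds 0) :=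
    tendsto_pow_atTop_nhds_zero_of_lt_one hβ0.le hβ1
  have hev : ∀ᶠ n in atTop, -x * β ^ n ≤ 1 := by
    have ht : Tendsto (fun n : ℕ => -x * β ^ n) atTop (nhds 0) := by
      simpa using hβn.const_mul (-x)
    have := ht.eventually_lt_const (by norm_num : (0 : ℝ) < 1)
    filter_upwards [this] with n hn
    linarith
  have key : ∀ᶠ n : ℕ in atTop,
      Fp (x / β ^ (-(n : ℤ)) + 1) = 1 - c * q ^ n := by
    filter_upwards [hev] with n hn
    have hynpos : 0 < -x * β ^ n := mul_pos hxpos (pow_pos hβ0 n)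
    have harg : x / β ^ (-(n : ℤ)) + 1 = 1 - (-x * β ^ n) := by
      rw [zpow_neg, zpow_natCast, div_inv_eq_mul]
      ring
    rw [harg]
    have hFpval : Fp (1 - (-x * β ^ n)) = 1 - Fq (-x * β ^ n) := by
      have := hsym (-x * β ^ n)
      linarith
    rw [hFpval, hrep _ hynpos hn]
    have hlog : Real.log (-x * β ^ n) = Real.log (-x) + (n : ℝ) * Real.log β := by
      rw [Real.log_mul hxpos.ne' (pow_pos hβ0 n).ne', Real.log_pow]
    have hν : ν (Real.log (-x * β ^ n)) = ν (Real.log (-x)) := by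
      rw [hlog]; exact hper _ n
    have hpow : (-x * β ^ n) ^ s = (-x) ^ s * q ^ n := by
      rw [Real.mul_rpow hxpos.le (pow_pos hβ0 n).le]
      congr 1
      rw [← Real.rpow_natCast β n, ← Real.rpow_mul hβ0.le, mul_comm,
        Real.rpow_mul hβ0.le, hβs, Real.rpow_natCast]
    rw [hν, hpow, hc]
    ring
  refine (aux_limit q c hq0 hq1 hcpos).congr' ?_
  filter_upwards [key] with n hn
  rw [hn]
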